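/- arXiv:math/0509553 — 2 statements merged into one kernel-verified Lean document; each statement's English description precedes it below -/
import Mathlib

section
/- Change of variables for the negative side: ∫₀^∞ n((−∞,−φ₋(s)]) ds = ∫_{(−∞,0)} (1 + μ̄(D_μ⁻¹(G_μ(s))) − μ̄(s))⁻¹ dμ(s) (equality in [0,∞]). -/
open MeasureTheory Filter
open scoped ENNReal Topology Classical

/-- Topological support of a Borel measure on ℝ. -/
def measSupport (μ : MeasureTheory.Measure ℝ) : Set ℝ :=
  {x | ∀ U : Set ℝ, IsOpen U → x ∈ U → 0 < μ U}

/-- `D_μ(y) = ∫_{[0,y]} n([s,∞))⁻¹ dμ(s)` for `y ≥ 0` (equal to `0` for `y < 0`). -/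
noncomputable def Dmu (μ n : MeasureTheory.Measure ℝ) (y : ℝ) : ℝ≥0∞ :=
  ∫⁻ s in Set.Icc (0 : ℝ) y, (n (Set.Ici s))⁻¹ ∂μ

/-- `G_μ(x) = ∫_{[x,0]} n((−∞,s])⁻¹ dμ(s)` for `x ≤ 0` (equal to `0` for `x > 0`). -/
noncomputable def Gmu (μ n : MeasureTheory.Measure ℝ) (x : ℝ) : ℝ≥0∞ :=
  ∫⁻ s in Set.Icc x (0 : ℝ), (n (Set.Iic s))⁻¹ ∂μ

/-- The set `{y ≥ 0 : D_μ(y) > v}`; its infimum is the right-continuous inverse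
`D_μ⁻¹(v)`, with `D_μ⁻¹(v) = ∞` when the set is empty. -/
def DinvSet (μ n : MeasureTheory.Measure ℝ) (v : ℝ≥0∞) : Set ℝ :=
  {y : ℝ | 0 ≤ y ∧ v < Dmu μ n y}

/-- The set `{x ≤ 0 : G_μ(x) > v}`; its supremum is the right-continuous inverse
`G_μ⁻¹(v)`, with `G_μ⁻¹(v) = −∞` when the set is empty. -/
def GinvSet (μ n : MeasureTheory.Measure ℝ) (v : ℝ≥0∞) : Set ℝ :=
  {x : ℝ | x ≤ 0 ∧ v < Gmu μ n x}

/-- `μ̄(D_μ⁻¹(v))`, with the convention `μ̄(∞) = 0`. -/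
noncomputable def mubarDinv (μ n : MeasureTheory.Measure ℝ) (v : ℝ≥0∞) : ℝ :=
  if (DinvSet μ n v).Nonempty then (μ (Set.Ici (sInf (DinvSet μ n v)))).toReal else 0

/-- `μ̄(G_μ⁻¹(v))`, with the convention `μ̄(−∞) = 1`. -/
noncomputable def mubarGinv (μ n : MeasureTheory.Measure ℝ) (v : ℝ≥0∞) : ℝ :=
  if (GinvSet μ n v).Nonempty then (μ (Set.Ici (sSup (GinvSet μ n v)))).toReal else 1

/-- `n([D_μ⁻¹(v),∞))`, with the convention that it is `0` when `D_μ⁻¹(v) = ∞`. -/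
noncomputable def nDinv (μ n : MeasureTheory.Measure ℝ) (v : ℝ≥0∞) : ℝ≥0∞ :=
  if (DinvSet μ n v).Nonempty then n (Set.Ici (sInf (DinvSet μ n v))) else 0

/-- `n((−∞,G_μ⁻¹(v)])`, with the convention that it is `0` when `G_μ⁻¹(v) = −∞`. -/
noncomputable def nGinv (μ n : MeasureTheory.Measure ℝ) (v : ℝ≥0∞) : ℝ≥0∞ :=
  if (GinvSet μ n v).Nonempty then n (Set.Iic (sSup (GinvSet μ n v))) else 0

/-- The integrand `[n([s,∞)) · (1 + μ̄(s) − μ̄(G_μ⁻¹(D_μ(s))))]⁻¹` of `ψ₊`. -/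
noncomputable def psiPlusIntegrand (μ n : MeasureTheory.Measure ℝ) (s : ℝ) : ℝ≥0∞ :=
  (n (Set.Ici s) *
    ENNReal.ofReal (1 + (μ (Set.Ici s)).toReal - mubarGinv μ n (Dmu μ n s)))⁻¹

/-- `ψ₊(y) = ∫_{[0,y]} [n([s,∞)) · (1 + μ̄(s) − μ̄(G_μ⁻¹(D_μ(s))))]⁻¹ dμ(s)`. -/
noncomputable def psiPlus (μ n : MeasureTheory.Measure ℝ) (y : ℝ) : ℝ≥0∞ :=
  ∫⁻ s in Set.Icc (0 : ℝ) y, psiPlusIntegrand μ n s ∂μ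

/-- The integrand `[n((−∞,s]) · (1 + μ̄(D_μ⁻¹(G_μ(s))) − μ̄(s))]⁻¹` of `ψ₋`. -/
noncomputable def psiMinusIntegrand (μ n : MeasureTheory.Measure ℝ) (s : ℝ) : ℝ≥0∞ :=
  (n (Set.Iic s) *
    ENNReal.ofReal (1 + mubarDinv μ n (Gmu μ n s) - (μ (Set.Ici s)).toReal))⁻¹

/-- `ψ₋(z) = ∫_{[−z,0]} [n((−∞,s]) · (1 + μ̄(D_μ⁻¹(G_μ(s))) − μ̄(s))]⁻¹ dμ(s)`. -/
noncomputable def psiMinus (μ n : MeasureTheory.Measure ℝ) (z : ℝ) : ℝ≥0∞ :=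
  ∫⁻ s in Set.Icc (-z) (0 : ℝ), psiMinusIntegrand μ n s ∂μ

/-- The set `{y ≥ 0 : ψ₊(y) ≥ l}` whose infimum is the left-continuous inverse `φ₊(l)`. -/
def phiPlusSet (μ n : MeasureTheory.Measure ℝ) (l : ℝ) : Set ℝ :=
  {y : ℝ | 0 ≤ y ∧ ENNReal.ofReal l ≤ psiPlus μ n y}

/-- The set `{z ≥ 0 : ψ₋(z) ≥ l}` whose infimum is the left-continuous inverse `φ₋(l)`. -/
def phiMinusSet (μ n : MeasureTheory.Measure ℝ) (l : ℝ) : Set ℝ :=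
  {z : ℝ | 0 ≤ z ∧ ENNReal.ofReal l ≤ psiMinus μ n z}

/-- `φ₊(l) = inf{y ≥ 0 : ψ₊(y) ≥ l}`. -/
noncomputable def phiPlus (μ n : MeasureTheory.Measure ℝ) (l : ℝ) : ℝ :=
  sInf (phiPlusSet μ n l)

/-- `φ₋(l) = inf{z ≥ 0 : ψ₋(z) ≥ l}`. -/
noncomputable def phiMinus (μ n : MeasureTheory.Measure ℝ) (l : ℝ) : ℝ :=
  sInf (phiMinusSet μ n l)

/-- `n([φ₊(l),∞))`, with the convention that it is `0` when `φ₊(l) = inf ∅ = ∞`. -/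
noncomputable def nPhiPlus (μ n : MeasureTheory.Measure ℝ) (l : ℝ) : ℝ≥0∞ :=
  if (phiPlusSet μ n l).Nonempty then n (Set.Ici (phiPlus μ n l)) else 0

/-- `n((−∞,−φ₋(l)])`, with the convention that it is `0` when `φ₋(l) = inf ∅ = ∞`. -/
noncomputable def nPhiMinus (μ n : MeasureTheory.Measure ℝ) (l : ℝ) : ℝ≥0∞ :=
  if (phiMinusSet μ n l).Nonempty then n (Set.Iic (-(phiMinus μ n l))) else 0

/-- `∫₀^L [n((−∞,−φ₋(s)]) + n([φ₊(s),∞))] ds` for an upper limit `L ∈ [0,∞]`. -/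
noncomputable def cutInt (μ n : MeasureTheory.Measure ℝ) (L : ℝ≥0∞) : ℝ≥0∞ :=
  ∫⁻ s in {s : ℝ | 0 < s ∧ ENNReal.ofReal s < L},
    (nPhiMinus μ n s + nPhiPlus μ n s)

/-- `exp(−a)` for `a ∈ [0,∞]`, with `exp(−∞) = 0`. -/
noncomputable def expNegE (a : ℝ≥0∞) : ℝ :=
  if a = ⊤ then 0 else Real.exp (-a.toReal)

/-- `ρ(l) = exp(−∫₀^l [n((−∞,−φ₋(s)]) + n([φ₊(s),∞))] ds)`. -/
noncomputable def rho (μ n : MeasureTheory.Measure ℝ) (l : ℝ) : ℝ≥0∞ :=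
  ENNReal.ofReal (expNegE (cutInt μ n (ENNReal.ofReal l)))
section Aux

variable (μ n : MeasureTheory.Measure ℝ)

/-- abbreviation for the factor `b`. -/
noncomputable def bFun (s : ℝ) : ℝ≥0∞ :=
  ENNReal.ofReal (1 + (0:ℝ) - (μ (Set.Ici s)).toReal)

lemma mono_nIic : Monotone fun s : ℝ => n (Set.Iic s) :=
  fun _ _ h => measure_mono (Set.Iic_subset_Iic.2 h)

lemma anti_muIci [IsProbabilityMeasure μ] :
    Antitone fun s : ℝ => (μ (Set.Ici s)).toReal :=
  fun _ _ h => ENNReal.toReal_mono (measure_ne_top μ _)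
    (measure_mono (Set.Ici_subset_Ici.2 h))

lemma anti_Gmu : Antitone (Gmu μ n) :=
  fun _ _ h => lintegral_mono_set (Set.Icc_subset_Icc h le_rfl)

lemma anti_mubarDinv [IsProbabilityMeasure μ] : Antitone (mubarDinv μ n) := by
  intro v₁ v₂ h
  have hsub : DinvSet μ n v₂ ⊆ DinvSet μ n v₁ :=
    fun y hy => ⟨hy.1, lt_of_le_of_lt h hy.2⟩
  by_cases h2 : (DinvSet μ n v₂).Nonempty
  · have h1 : (DinvSet μ n v₁).Nonempty := h2.mono hsub
    rw [mubarDinv, if_pos h2, mubarDinv, if_pos h1]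
    have hle : sInf (DinvSet μ n v₁) ≤ sInf (DinvSet μ n v₂) :=
      csInf_le_csInf ⟨0, fun y hy => hy.1⟩ h2 hsub
    exact ENNReal.toReal_mono (measure_ne_top μ _)
      (measure_mono (Set.Ici_subset_Ici.2 hle))
  · rw [mubarDinv, if_neg h2]
    by_cases h1 : (DinvSet μ n v₁).Nonempty
    · rw [mubarDinv, if_pos h1]; exact ENNReal.toReal_nonneg
    · rw [mubarDinv, if_neg h1]

lemma mono_mubarDinvGmu [IsProbabilityMeasure μ] :
    Monotone fun s => mubarDinv μ n (Gmu μ n s) :=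
  fun _ _ h => anti_mubarDinv μ n (anti_Gmu μ n h)

lemma measurable_psiMinusIntegrand [IsProbabilityMeasure μ] :
    Measurable (psiMinusIntegrand μ n) := by
  refine (((mono_nIic n).measurable).mul ?_).inv
  exact ENNReal.measurable_ofReal.comp
    ((measurable_const.add (mono_mubarDinvGmu μ n).measurable).sub
      (anti_muIci μ).measurable)

lemma psiMinus_mono : Monotone (psiMinus μ n) :=
  fun _ _ h => lintegral_mono_set (Set.Icc_subset_Icc (neg_le_neg h) le_rfl)

/-- the right-continuous regularization of `z ↦ ψ₋(−z)` at `t`. -/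
noncomputable def PsiR (t : ℝ) : ℝ≥0∞ :=
  ⨅ k : ℕ, psiMinus μ n (-t + 1 / ((k : ℝ) + 1))

lemma psiMinus_le_PsiR (t : ℝ) : psiMinus μ n (-t) ≤ PsiR μ n t :=
  le_iInf fun k => psiMinus_mono μ n (le_add_of_nonneg_right (by positivity))

lemma anti_PsiR : Antitone (PsiR μ n) := by
  intro a b h
  exact le_iInf fun k => iInf_le_of_le k (psiMinus_mono μ n (by linarith))

lemma measurable_PsiR : Measurable (PsiR μ n) := (anti_PsiR μ n).measurable

lemma measSupport_compl_null : μ (measSupport μ)ᶜ = 0 := by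
  set N := ⋃ pq : ℚ × ℚ,
    if μ (Set.Ioo (pq.1 : ℝ) (pq.2 : ℝ)) = 0 then Set.Ioo (pq.1 : ℝ) (pq.2 : ℝ) else ∅ with hNdef
  have hN : μ N = 0 := by
    refine measure_iUnion_null fun pq => ?_
    split_ifs with h
    · exact h
    · simp
  refine measure_mono_null ?_ hN
  intro x hx
  simp only [Set.mem_compl_iff, measSupport, Set.mem_setOf_eq] at hx
  push_neg at hx
  obtain ⟨U, hUo, hxU, hU0⟩ := hx
  have hU0' : μ U = 0 := le_antisymm hU0 zero_le
  obtain ⟨ε, hε, hball⟩ := Metric.isOpen_iff.1 hUo x hxU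
  rw [Real.ball_eq_Ioo] at hball
  obtain ⟨p, hp1, hp2⟩ := exists_rat_btwn (show x - ε < x by linarith)
  obtain ⟨q, hq1, hq2⟩ := exists_rat_btwn (show x < x + ε by linarith)
  have hsub : Set.Ioo (p : ℝ) (q : ℝ) ⊆ U := fun y hy =>
    hball ⟨by linarith [hy.1], by linarith [hy.2]⟩
  have h0 : μ (Set.Ioo (p : ℝ) (q : ℝ)) = 0 := measure_mono_null hsub hU0'
  refine Set.mem_iUnion.2 ⟨(p, q), ?_⟩
  rw [if_pos h0]
  exact ⟨hp2, hq1⟩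

lemma sigmaFinite_restrict_Iio
    (hnfin : ∀ s : ℝ, 0 < s → n (Set.Ici s) < ⊤ ∧ n (Set.Iic (-s)) < ⊤) :
    SigmaFinite (n.restrict (Set.Iio (0 : ℝ))) := by
  refine ⟨⟨⟨fun k => Set.Iic (-(1 / ((k : ℝ) + 1))) ∪ Set.Ici 0, fun _ => trivial, ?_, ?_⟩⟩⟩
  · intro k
    rw [Measure.restrict_apply' measurableSet_Iio]
    have hE : (Set.Iic (-(1 / ((k : ℝ) + 1))) ∪ Set.Ici 0) ∩ Set.Iio 0
        = Set.Iic (-(1 / ((k : ℝ) + 1))) := by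
      have hk : (0 : ℝ) < 1 / ((k : ℝ) + 1) := by positivity
      ext x
      simp only [Set.mem_inter_iff, Set.mem_union, Set.mem_Iic, Set.mem_Ici, Set.mem_Iio]
      constructor
      · rintro ⟨h1 | h1, h2⟩
        · exact h1
        · linarith
      · intro h1
        exact ⟨Or.inl h1, by linarith⟩
    rw [hE]
    exact (hnfin _ (by positivity)).2
  · rw [Set.iUnion_eq_univ_iff]
    intro x
    rcases le_or_gt 0 x with h | h
    · exact ⟨0, Or.inr h⟩
    · obtain ⟨k, hk⟩ := exists_nat_one_div_lt (show (0 : ℝ) < -x by linarith)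
      exact ⟨k, Or.inl (Set.mem_Iic.2 (by linarith))⟩

lemma sfinite_restrict_Iic
    (hnfin : ∀ s : ℝ, 0 < s → n (Set.Ici s) < ⊤ ∧ n (Set.Iic (-s)) < ⊤) :
    SFinite (n.restrict (Set.Iic (0 : ℝ))) := by
  have h : Set.Iic (0 : ℝ) = Set.Iio 0 ∪ {0} := by
    ext x; simp [le_iff_lt_or_eq]
  rw [h, Measure.restrict_union (by simp) (measurableSet_singleton 0),
    Measure.restrict_singleton]
  haveI := sigmaFinite_restrict_Iio n hnfin
  infer_instance

lemma mul_inv_mul_le (a b : ℝ≥0∞) : a * (a * b)⁻¹ ≤ b⁻¹ := by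
  rcases eq_or_ne a 0 with rfl | ha0
  · simp
  rcases eq_or_ne a ⊤ with rfl | hatop
  · rcases eq_or_ne b 0 with rfl | hb0
    · simp
    · simp [ENNReal.top_mul hb0]
  · rw [ENNReal.mul_inv (Or.inl ha0) (Or.inl hatop), ← mul_assoc,
      ENNReal.mul_inv_cancel ha0 hatop, one_mul]

end Aux
section Aux2

variable (μ n : MeasureTheory.Measure ℝ)

lemma layercake_le (m : MeasureTheory.Measure ℝ) [SFinite m] {g : ℝ → ℝ≥0∞}
    (hg : Measurable g) :
    ∫⁻ l in Set.Ioi (0 : ℝ), m {t | ENNReal.ofReal l ≤ g t} = ∫⁻ t, g t ∂m := by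
  have hkey : ∀ l : ℝ, m {t | ENNReal.ofReal l ≤ g t}
      = ∫⁻ t, Set.indicator {t | ENNReal.ofReal l ≤ g t} 1 t ∂m := by
    intro l
    exact (lintegral_indicator_one (hg measurableSet_Ici)).symm
  calc ∫⁻ l in Set.Ioi (0 : ℝ), m {t | ENNReal.ofReal l ≤ g t}
      = ∫⁻ l in Set.Ioi (0 : ℝ), ∫⁻ t, Set.indicator {t | ENNReal.ofReal l ≤ g t} 1 t ∂m := by
        exact lintegral_congr fun l => hkey l
    _ = ∫⁻ t, (∫⁻ l in Set.Ioi (0 : ℝ), Set.indicator {t | ENNReal.ofReal l ≤ g t} 1 t) ∂m := by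
        refine lintegral_lintegral_swap ?_
        have : (Function.uncurry fun l t => Set.indicator {t | ENNReal.ofReal l ≤ g t} (1 : ℝ → ℝ≥0∞) t)
            = Set.indicator {p : ℝ × ℝ | ENNReal.ofReal p.1 ≤ g p.2} 1 := by
          funext p
          rcases p with ⟨l, t⟩
          simp only [Function.uncurry, Set.indicator_apply, Set.mem_setOf_eq, Pi.one_apply]
        rw [this]
        exact (measurable_one.indicator (measurableSet_le
          (ENNReal.measurable_ofReal.comp measurable_fst) (hg.comp measurable_snd))).aemeasurable
    _ = ∫⁻ t, g t ∂m := by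
        refine lintegral_congr fun t => ?_
        have hms : MeasurableSet {l : ℝ | ENNReal.ofReal l ≤ g t} :=
          measurableSet_le ENNReal.measurable_ofReal measurable_const
        have h1 : (fun l => Set.indicator {t | ENNReal.ofReal l ≤ g t} (1 : ℝ → ℝ≥0∞) t)
            = Set.indicator {l : ℝ | ENNReal.ofReal l ≤ g t} 1 := by
          funext l
          simp only [Set.indicator_apply, Set.mem_setOf_eq, Pi.one_apply]
        rw [h1, lintegral_indicator_one hms, Measure.restrict_apply hms]
        by_cases h : g t = ⊤
        · have : {l : ℝ | ENNReal.ofReal l ≤ g t} ∩ Set.Ioi 0 = Set.Ioi 0 := by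
            rw [Set.inter_eq_right]
            intro l _
            simp [h]
          rw [this, Real.volume_Ioi, h]
        · have : {l : ℝ | ENNReal.ofReal l ≤ g t} ∩ Set.Ioi 0 = Set.Ioc 0 (g t).toReal := by
            ext l
            simp only [Set.mem_inter_iff, Set.mem_setOf_eq, Set.mem_Ioi, Set.mem_Ioc,
              ENNReal.ofReal_le_iff_le_toReal h]
            tauto
          rw [this, Real.volume_Ioc, sub_zero, ENNReal.ofReal_toReal h]

lemma layercake_lt (m : MeasureTheory.Measure ℝ) [SFinite m] {g : ℝ → ℝ≥0∞}
    (hg : Measurable g) :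
    ∫⁻ l in Set.Ioi (0 : ℝ), m {t | ENNReal.ofReal l < g t} = ∫⁻ t, g t ∂m := by
  have hkey : ∀ l : ℝ, m {t | ENNReal.ofReal l < g t}
      = ∫⁻ t, Set.indicator {t | ENNReal.ofReal l < g t} 1 t ∂m := by
    intro l
    exact (lintegral_indicator_one (hg measurableSet_Ioi)).symm
  calc ∫⁻ l in Set.Ioi (0 : ℝ), m {t | ENNReal.ofReal l < g t}
      = ∫⁻ l in Set.Ioi (0 : ℝ), ∫⁻ t, Set.indicator {t | ENNReal.ofReal l < g t} 1 t ∂m := by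
        exact lintegral_congr fun l => hkey l
    _ = ∫⁻ t, (∫⁻ l in Set.Ioi (0 : ℝ), Set.indicator {t | ENNReal.ofReal l < g t} 1 t) ∂m := by
        refine lintegral_lintegral_swap ?_
        have : (Function.uncurry fun l t => Set.indicator {t | ENNReal.ofReal l < g t} (1 : ℝ → ℝ≥0∞) t)
            = Set.indicator {p : ℝ × ℝ | ENNReal.ofReal p.1 < g p.2} 1 := by
          funext p
          rcases p with ⟨l, t⟩
          simp only [Function.uncurry, Set.indicator_apply, Set.mem_setOf_eq, Pi.one_apply]
        rw [this]
        exact (measurable_one.indicator (measurableSet_lt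
          (ENNReal.measurable_ofReal.comp measurable_fst) (hg.comp measurable_snd))).aemeasurable
    _ = ∫⁻ t, g t ∂m := by
        refine lintegral_congr fun t => ?_
        have hms : MeasurableSet {l : ℝ | ENNReal.ofReal l < g t} :=
          measurableSet_lt ENNReal.measurable_ofReal measurable_const
        have h1 : (fun l => Set.indicator {t | ENNReal.ofReal l < g t} (1 : ℝ → ℝ≥0∞) t)
            = Set.indicator {l : ℝ | ENNReal.ofReal l < g t} 1 := by
          funext l
          simp only [Set.indicator_apply, Set.mem_setOf_eq, Pi.one_apply]
        rw [h1, lintegral_indicator_one hms, Measure.restrict_apply hms]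
        by_cases h : g t = ⊤
        · have : {l : ℝ | ENNReal.ofReal l < g t} ∩ Set.Ioi 0 = Set.Ioi 0 := by
            rw [Set.inter_eq_right]
            intro l _
            simp [h]
          rw [this, Real.volume_Ioi, h]
        · have : {l : ℝ | ENNReal.ofReal l < g t} ∩ Set.Ioi 0 = Set.Ioo 0 (g t).toReal := by
            ext l
            simp only [Set.mem_inter_iff, Set.mem_setOf_eq, Set.mem_Ioi, Set.mem_Ioo]
            constructor
            · rintro ⟨h1', h2'⟩
              exact ⟨h2', (ENNReal.ofReal_lt_iff_lt_toReal h2'.le h).1 h1'⟩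
            · rintro ⟨h1', h2'⟩
              exact ⟨(ENNReal.ofReal_lt_iff_lt_toReal h1'.le h).2 h2', h1'⟩
          rw [this, Real.volume_Ioo, sub_zero, ENNReal.ofReal_toReal h]

end Aux2
section Aux3

variable (μ n : MeasureTheory.Measure ℝ)

lemma nPhiMinus_le (l : ℝ) :
    nPhiMinus μ n l ≤ (n.restrict (Set.Iic (0:ℝ))) {t | ENNReal.ofReal l ≤ PsiR μ n t} := by
  rw [nPhiMinus]
  split_ifs with h
  · have hphi0 : 0 ≤ phiMinus μ n l := Real.sInf_nonneg fun x hx => hx.1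
    have hsub : Set.Iic (-(phiMinus μ n l))
        ⊆ {t | ENNReal.ofReal l ≤ PsiR μ n t} ∩ Set.Iic 0 := by
      intro t ht
      rw [Set.mem_Iic] at ht
      constructor
      · show ENNReal.ofReal l ≤ PsiR μ n t
        rw [PsiR]
        refine le_iInf fun k => ?_
        have hdk : (0:ℝ) < 1 / ((k : ℝ) + 1) := by positivity
        have h1 : sInf (phiMinusSet μ n l) < -t + 1 / ((k : ℝ) + 1) := by
          have : phiMinus μ n l ≤ -t := by linarith
          rw [phiMinus] at this
          linarith
        obtain ⟨w, hw, hwlt⟩ := (csInf_lt_iff ⟨0, fun x hx => hx.1⟩ h).1 h1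
        exact le_trans hw.2 (psiMinus_mono μ n hwlt.le)
      · exact Set.mem_Iic.2 (by linarith)
    calc n (Set.Iic (-(phiMinus μ n l)))
        ≤ n ({t | ENNReal.ofReal l ≤ PsiR μ n t} ∩ Set.Iic 0) := measure_mono hsub
      _ = _ := (MeasureTheory.Measure.restrict_apply' measurableSet_Iic).symm
  · exact zero_le

lemma le_nPhiMinus (l : ℝ) :
    (n.restrict (Set.Iic (0:ℝ))) {t | ENNReal.ofReal l < PsiR μ n t} ≤ nPhiMinus μ n l := by
  rw [MeasureTheory.Measure.restrict_apply' measurableSet_Iic]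
  have hmem : ∀ t : ℝ, t ≤ 0 → ENNReal.ofReal l < PsiR μ n t →
      ∀ k : ℕ, -t + 1 / ((k : ℝ) + 1) ∈ phiMinusSet μ n l := by
    intro t ht hlt k
    have hdk : (0:ℝ) < 1 / ((k : ℝ) + 1) := by positivity
    exact ⟨by linarith, le_of_lt (lt_of_lt_of_le hlt (iInf_le _ k))⟩
  by_cases h : (phiMinusSet μ n l).Nonempty
  · rw [nPhiMinus, if_pos h]
    refine measure_mono ?_
    rintro t ⟨ht1, ht2⟩
    rw [Set.mem_setOf_eq] at ht1
    rw [Set.mem_Iic] at ht2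
    have hle : phiMinus μ n l ≤ -t := by
      by_contra hc
      push_neg at hc
      obtain ⟨k, hk⟩ := exists_nat_one_div_lt (show (0:ℝ) < phiMinus μ n l - (-t) by linarith)
      have := csInf_le ⟨0, fun x hx => hx.1⟩ (hmem t ht2 ht1 k)
      rw [← phiMinus] at this
      linarith
    exact Set.mem_Iic.2 (by linarith)
  · have hempty : {t | ENNReal.ofReal l < PsiR μ n t} ∩ Set.Iic 0 = ∅ := by
      rw [Set.eq_empty_iff_forall_notMem]
      rintro t ⟨ht1, ht2⟩
      exact h ⟨_, hmem t ht2 ht1 0⟩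
    rw [hempty]
    simp

lemma stepI [IsProbabilityMeasure μ]
    (hnfin : ∀ s : ℝ, 0 < s → n (Set.Ici s) < ⊤ ∧ n (Set.Iic (-s)) < ⊤) :
    ∫⁻ l in Set.Ioi (0 : ℝ), nPhiMinus μ n l
      = ∫⁻ t in Set.Iic (0 : ℝ), PsiR μ n t ∂n := by
  haveI : SFinite (n.restrict (Set.Iic (0:ℝ))) := sfinite_restrict_Iic n hnfin
  have hg : Measurable (PsiR μ n) := measurable_PsiR μ n
  have hup := layercake_le (n.restrict (Set.Iic (0:ℝ))) hg
  have hlo := layercake_lt (n.restrict (Set.Iic (0:ℝ))) hg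
  apply le_antisymm
  · calc ∫⁻ l in Set.Ioi (0 : ℝ), nPhiMinus μ n l
        ≤ ∫⁻ l in Set.Ioi (0 : ℝ), (n.restrict (Set.Iic (0:ℝ))) {t | ENNReal.ofReal l ≤ PsiR μ n t} :=
          lintegral_mono fun l => nPhiMinus_le μ n l
      _ = _ := hup
  · calc ∫⁻ t in Set.Iic (0 : ℝ), PsiR μ n t ∂n
        = ∫⁻ l in Set.Ioi (0 : ℝ), (n.restrict (Set.Iic (0:ℝ))) {t | ENNReal.ofReal l < PsiR μ n t} :=
          hlo.symm
      _ ≤ ∫⁻ l in Set.Ioi (0 : ℝ), nPhiMinus μ n l := lintegral_mono fun l => le_nPhiMinus μ n l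

end Aux3
section Aux4

variable (μ n : MeasureTheory.Measure ℝ)

lemma psiMinus_as_nu [IsProbabilityMeasure μ] (z : ℝ) :
    psiMinus μ n z = (μ.withDensity (psiMinusIntegrand μ n)) (Set.Icc (-z) 0) :=
  (withDensity_apply _ measurableSet_Icc).symm

lemma PsiR_eq_of_ne_top [IsProbabilityMeasure μ] (t : ℝ)
    (h : ∃ k : ℕ, psiMinus μ n (-t + 1 / ((k : ℝ) + 1)) ≠ ⊤) :
    PsiR μ n t = psiMinus μ n (-t) := by
  set ν := μ.withDensity (psiMinusIntegrand μ n) with hν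
  have hset : ∀ k : ℕ, Set.Icc (-(-t + 1 / ((k : ℝ) + 1))) (0:ℝ)
      = Set.Icc (t - 1 / ((k : ℝ) + 1)) 0 := by
    intro k; ring_nf
  have hanti : Antitone fun k : ℕ => Set.Icc (t - 1 / ((k : ℝ) + 1)) (0:ℝ) := by
    intro i j hij
    refine Set.Icc_subset_Icc ?_ le_rfl
    have h1 : (1 : ℝ) / ((j : ℝ) + 1) ≤ 1 / ((i : ℝ) + 1) := by
      apply one_div_le_one_div_of_le (by positivity)
      exact_mod_cast by omega
    linarith
  have hiInter : (⋂ k : ℕ, Set.Icc (t - 1 / ((k : ℝ) + 1)) (0:ℝ)) = Set.Icc t 0 := by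
    ext x
    simp only [Set.mem_iInter, Set.mem_Icc]
    constructor
    · intro hx
      refine ⟨?_, (hx 0).2⟩
      by_contra hc
      push_neg at hc
      obtain ⟨k, hk⟩ := exists_nat_one_div_lt (show (0:ℝ) < t - x by linarith)
      linarith [(hx k).1]
    · intro hx k
      have : (0:ℝ) < 1 / ((k : ℝ) + 1) := by positivity
      exact ⟨by linarith [hx.1], hx.2⟩
  obtain ⟨k₀, hk₀⟩ := h
  have hfin : ∃ k : ℕ, ν (Set.Icc (t - 1 / ((k : ℝ) + 1)) (0:ℝ)) ≠ ⊤ := by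
    refine ⟨k₀, ?_⟩
    rw [← hset k₀, ← psiMinus_as_nu]
    exact hk₀
  have key : ν (Set.Icc t 0) = ⨅ k : ℕ, ν (Set.Icc (t - 1 / ((k : ℝ) + 1)) (0:ℝ)) := by
    rw [← hiInter]
    exact hanti.measure_iInter
      (fun k => measurableSet_Icc.nullMeasurableSet) hfin
  rw [PsiR]
  have h2 : ∀ k : ℕ, psiMinus μ n (-t + 1 / ((k : ℝ) + 1))
      = ν (Set.Icc (t - 1 / ((k : ℝ) + 1)) (0:ℝ)) := by
    intro k
    rw [psiMinus_as_nu, hset]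
  have h3 : psiMinus μ n (-t) = ν (Set.Icc t 0) := by
    rw [psiMinus_as_nu, neg_neg]
  rw [h3, key]
  exact iInf_congr h2

lemma stepIII [IsProbabilityMeasure μ]
    (hnfin : ∀ s : ℝ, 0 < s → n (Set.Ici s) < ⊤ ∧ n (Set.Iic (-s)) < ⊤) :
    ∫⁻ t in Set.Iic (0 : ℝ), psiMinus μ n (-t) ∂n
      = ∫⁻ s in Set.Iic (0 : ℝ), n (Set.Iic s) * psiMinusIntegrand μ n s ∂μ := by
  haveI : SFinite (n.restrict (Set.Iic (0:ℝ))) := sfinite_restrict_Iic n hnfin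
  have hf : Measurable (psiMinusIntegrand μ n) := measurable_psiMinusIntegrand μ n
  have h1 : ∀ t : ℝ, psiMinus μ n (-t)
      = ∫⁻ s, (Set.Icc t 0).indicator (psiMinusIntegrand μ n) s ∂μ := by
    intro t
    rw [lintegral_indicator measurableSet_Icc, psiMinus, neg_neg]
  calc ∫⁻ t in Set.Iic (0 : ℝ), psiMinus μ n (-t) ∂n
      = ∫⁻ t, (∫⁻ s, (Set.Icc t 0).indicator (psiMinusIntegrand μ n) s ∂μ)
          ∂(n.restrict (Set.Iic (0:ℝ))) := lintegral_congr fun t => h1 t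
    _ = ∫⁻ s, (∫⁻ t, (Set.Icc t 0).indicator (psiMinusIntegrand μ n) s
          ∂(n.restrict (Set.Iic (0:ℝ)))) ∂μ := by
        refine lintegral_lintegral_swap ?_
        have heq : (Function.uncurry fun t s => (Set.Icc t 0).indicator (psiMinusIntegrand μ n) s)
            = Set.indicator {p : ℝ × ℝ | p.1 ≤ p.2 ∧ p.2 ≤ 0} (fun p => psiMinusIntegrand μ n p.2) := by
          funext p
          rcases p with ⟨t, s⟩
          simp only [Function.uncurry, Set.indicator_apply, Set.mem_Icc, Set.mem_setOf_eq]
        rw [heq]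
        exact ((hf.comp measurable_snd).indicator
          ((measurableSet_le measurable_fst measurable_snd).inter
            (measurableSet_le measurable_snd measurable_const))).aemeasurable
    _ = ∫⁻ s, (Set.Iic (0:ℝ)).indicator (fun s => n (Set.Iic s) * psiMinusIntegrand μ n s) s ∂μ := by
        refine lintegral_congr fun s => ?_
        by_cases hs : s ≤ 0
        · have heq2 : (fun t => (Set.Icc t 0).indicator (psiMinusIntegrand μ n) s)
              = Set.indicator (Set.Iic s) (fun _ => psiMinusIntegrand μ n s) := by
            funext t
            by_cases ht : t ≤ s <;>
              simp [Set.indicator_apply, Set.mem_Icc, Set.mem_Iic, ht, hs]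
          rw [heq2, lintegral_indicator_const measurableSet_Iic,
            MeasureTheory.Measure.restrict_apply' measurableSet_Iic]
          have : Set.Iic s ∩ Set.Iic (0:ℝ) = Set.Iic s := by
            rw [Set.Iic_inter_Iic, min_eq_left hs]
          rw [this, Set.indicator_of_mem (Set.mem_Iic.2 hs), mul_comm]
        · have heq2 : (fun t => (Set.Icc t 0).indicator (psiMinusIntegrand μ n) s)
              = fun _ : ℝ => (0 : ℝ≥0∞) := by
            funext t
            simp [Set.indicator_apply, Set.mem_Icc, hs]
          rw [heq2, lintegral_const, zero_mul,
            Set.indicator_of_notMem (by simpa using hs)]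
    _ = ∫⁻ s in Set.Iic (0 : ℝ), n (Set.Iic s) * psiMinusIntegrand μ n s ∂μ :=
        lintegral_indicator measurableSet_Iic _

lemma restrict_Iic_eq_Iio (hatomless : ∀ x : ℝ, μ {x} = 0) :
    μ.restrict (Set.Iic (0:ℝ)) = μ.restrict (Set.Iio 0) := by
  refine Measure.restrict_congr_set ?_
  rw [MeasureTheory.ae_eq_set]
  constructor
  · have : Set.Iic (0:ℝ) \ Set.Iio 0 = {0} := by
      ext x
      simp only [Set.mem_diff, Set.mem_Iic, Set.mem_Iio, not_lt, Set.mem_singleton_iff]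
      constructor
      · rintro ⟨h1, h2⟩; linarith
      · rintro rfl; exact ⟨le_rfl, le_rfl⟩
    rw [this]
    exact hatomless 0
  · have : Set.Iio (0:ℝ) \ Set.Iic 0 = ∅ := by
      ext x
      simp only [Set.mem_diff, Set.mem_Iio, Set.mem_Iic, Set.mem_empty_iff_false, iff_false,
        not_and, not_not]
      intro h; linarith
    rw [this]
    simp

lemma stepIV [IsProbabilityMeasure μ]
    (hnfin : ∀ s : ℝ, 0 < s → n (Set.Ici s) < ⊤ ∧ n (Set.Iic (-s)) < ⊤)
    (hnsupp : ∀ x ∈ measSupport μ, 0 < n (Set.Iic x) ∧ 0 < n (Set.Ici x)) :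
    ∫⁻ s in Set.Iio (0:ℝ), n (Set.Iic s) * psiMinusIntegrand μ n s ∂μ
      = ∫⁻ s in Set.Iio (0:ℝ),
          (ENNReal.ofReal (1 + mubarDinv μ n (Gmu μ n s) - (μ (Set.Ici s)).toReal))⁻¹ ∂μ := by
  apply lintegral_congr_ae
  have hsupp : ∀ᵐ s ∂μ, s ∈ measSupport μ := by
    rw [ae_iff]
    exact measSupport_compl_null μ
  show ∀ᵐ s ∂μ.restrict (Set.Iio (0:ℝ)), n (Set.Iic s) * psiMinusIntegrand μ n s
      = (ENNReal.ofReal (1 + mubarDinv μ n (Gmu μ n s) - (μ (Set.Ici s)).toReal))⁻¹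
  rw [ae_restrict_iff' measurableSet_Iio]
  filter_upwards [hsupp] with s hs hs0
  rw [Set.mem_Iio] at hs0
  have h0 : n (Set.Iic s) ≠ 0 := (hnsupp s hs).1.ne'
  have htop : n (Set.Iic s) ≠ ⊤ := by
    have := (hnfin (-s) (by linarith)).2
    rw [neg_neg] at this
    exact this.ne
  rw [psiMinusIntegrand, ENNReal.mul_inv (Or.inl h0) (Or.inl htop), ← mul_assoc,
    ENNReal.mul_inv_cancel h0 htop, one_mul]

end Aux4
section Final

variable (μ n : MeasureTheory.Measure ℝ)

/-- In the degenerate case where `ψ₋` jumps to `∞` strictly before an atom of `n`,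
the right-hand side is infinite. -/
lemma rhs_top_of_bad [IsProbabilityMeasure μ]
    (hnfin : ∀ s : ℝ, 0 < s → n (Set.Ici s) < ⊤ ∧ n (Set.Iic (-s)) < ⊤)
    (hnsupp : ∀ x ∈ measSupport μ, 0 < n (Set.Iic x) ∧ 0 < n (Set.Ici x))
    (t₀ : ℝ) (ht0 : t₀ ≤ 0)
    (hall : ∀ k : ℕ, psiMinus μ n (-t₀ + 1 / ((k : ℝ) + 1)) = ⊤)
    (hpsifin : psiMinus μ n (-t₀) ≠ ⊤) :
    ∫⁻ s in Set.Iio (0 : ℝ),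
        (ENNReal.ofReal (1 + mubarDinv μ n (Gmu μ n s) - (μ (Set.Ici s)).toReal))⁻¹ ∂μ = ⊤ := by
  set f := psiMinusIntegrand μ n with hfdef
  have hIcc : ∀ k : ℕ, ∫⁻ s in Set.Icc (t₀ - 1 / ((k : ℝ) + 1)) 0, f s ∂μ = ⊤ := by
    intro k
    have := hall k
    rw [psiMinus] at this
    convert this using 3
    ring_nf
  have hIccfin : ∫⁻ s in Set.Icc t₀ 0, f s ∂μ ≠ ⊤ := by
    have h := hpsifin
    rw [psiMinus, neg_neg] at h
    exact h
  have hIcoTop : ∀ k : ℕ, ∫⁻ s in Set.Ico (t₀ - 1 / ((k : ℝ) + 1)) t₀, f s ∂μ = ⊤ := by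
    intro k
    have hsub : Set.Icc (t₀ - 1 / ((k : ℝ) + 1)) (0:ℝ)
        ⊆ Set.Ico (t₀ - 1 / ((k : ℝ) + 1)) t₀ ∪ Set.Icc t₀ 0 := by
      intro x hx
      rcases lt_or_ge x t₀ with h | h
      · exact Or.inl ⟨hx.1, h⟩
      · exact Or.inr ⟨h, hx.2⟩
    have hle : (⊤ : ℝ≥0∞) ≤ ∫⁻ s in Set.Ico (t₀ - 1 / ((k : ℝ) + 1)) t₀, f s ∂μ
        + ∫⁻ s in Set.Icc t₀ 0, f s ∂μ := by
      rw [← hIcc k]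
      exact (lintegral_mono_set hsub).trans (lintegral_union_le _ _ _)
    rcases ENNReal.add_eq_top.1 (top_le_iff.1 hle) with h | h
    · exact h
    · exact absurd h hIccfin
  by_cases hn0 : n (Set.Iio t₀) = 0
  · exfalso
    have hμ0 : μ (Set.Iio t₀) = 0 := by
      have hsub : Set.Iio t₀ ⊆ (measSupport μ)ᶜ := by
        intro s hs
        intro hmem
        have h1 : n (Set.Iic s) ≤ n (Set.Iio t₀) :=
          measure_mono (fun x hx => Set.mem_Iio.2 (lt_of_le_of_lt (Set.mem_Iic.1 hx) (Set.mem_Iio.1 hs)))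
        rw [hn0] at h1
        exact absurd (le_antisymm h1 zero_le) (hnsupp s hmem).1.ne'
      exact measure_mono_null hsub (measSupport_compl_null μ)
    have : ∫⁻ s in Set.Ico (t₀ - 1 / ((0 : ℝ) + 1)) t₀, f s ∂μ = 0 := by
      refine le_antisymm ?_ zero_le
      calc ∫⁻ s in Set.Ico (t₀ - 1 / ((0 : ℝ) + 1)) t₀, f s ∂μ
          ≤ ∫⁻ s in Set.Iio t₀, f s ∂μ := lintegral_mono_set (fun x hx => hx.2)
        _ = 0 := setLIntegral_measure_zero _ _ hμ0
    have h00 := hIcoTop 0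
    rw [Nat.cast_zero] at h00
    rw [h00] at this
    exact ENNReal.top_ne_zero this
  · have hex : ∃ k : ℕ, n (Set.Iic (t₀ - 1 / ((k : ℝ) + 1))) ≠ 0 := by
      by_contra hc
      push_neg at hc
      apply hn0
      have hcover : Set.Iio t₀ = ⋃ k : ℕ, Set.Iic (t₀ - 1 / ((k : ℝ) + 1)) := by
        ext x
        simp only [Set.mem_Iio, Set.mem_iUnion, Set.mem_Iic]
        constructor
        · intro hx
          obtain ⟨k, hk⟩ := exists_nat_one_div_lt (show (0:ℝ) < t₀ - x by linarith)
          exact ⟨k, by linarith⟩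
        · rintro ⟨k, hk⟩
          have : (0:ℝ) < 1 / ((k : ℝ) + 1) := by positivity
          linarith
      rw [hcover]
      exact measure_iUnion_null hc
    obtain ⟨k, hk⟩ := hex
    set a := t₀ - 1 / ((k : ℝ) + 1) with hadef
    have hatop : n (Set.Iic a) ≠ ⊤ := by
      have h1 : (0:ℝ) < 1 / ((k : ℝ) + 1) := by positivity
      have := (hnfin (-a) (by rw [hadef]; linarith)).2
      rw [neg_neg] at this
      exact this.ne
    have hpt : ∀ s ∈ Set.Ico a t₀, n (Set.Iic a) * f s
        ≤ (ENNReal.ofReal (1 + mubarDinv μ n (Gmu μ n s) - (μ (Set.Ici s)).toReal))⁻¹ := by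
      intro s hs
      calc n (Set.Iic a) * f s ≤ n (Set.Iic s) * f s :=
            mul_le_mul_left (measure_mono (Set.Iic_subset_Iic.2 hs.1)) _
        _ ≤ _ := mul_inv_mul_le _ _
    have htop2 : ∫⁻ s in Set.Ico a t₀,
        (ENNReal.ofReal (1 + mubarDinv μ n (Gmu μ n s) - (μ (Set.Ici s)).toReal))⁻¹ ∂μ = ⊤ := by
      refine top_le_iff.1 ?_
      calc (⊤ : ℝ≥0∞) = n (Set.Iic a) * ∫⁻ s in Set.Ico a t₀, f s ∂μ := by
            rw [hIcoTop k, ENNReal.mul_top hk]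
        _ ≤ ∫⁻ s in Set.Ico a t₀, n (Set.Iic a) * f s ∂μ := lintegral_const_mul_le _ _
        _ ≤ _ := setLIntegral_mono' measurableSet_Ico hpt
    refine top_le_iff.1 ?_
    rw [← htop2]
    refine lintegral_mono_set ?_
    intro x hx
    exact Set.mem_Iio.2 (lt_of_lt_of_le hx.2 ht0)

end Final
/-- Change of variables for the negative side:
`∫₀^∞ n((−∞,−φ₋(s)]) ds = ∫_{(−∞,0)} (1 + μ̄(D_μ⁻¹(G_μ(s))) − μ̄(s))⁻¹ dμ(s)`
(equality in `[0,∞]`). -/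
theorem changeOfVariablesNegativeSide
    (μ n : MeasureTheory.Measure ℝ) [MeasureTheory.IsProbabilityMeasure μ]
    (hatomless : ∀ x : ℝ, μ {x} = 0)
    (hneg : 0 < μ (Set.Iio (0 : ℝ))) (hpos : 0 < μ (Set.Ioi (0 : ℝ)))
    (hnfin : ∀ s : ℝ, 0 < s → n (Set.Ici s) < ⊤ ∧ n (Set.Iic (-s)) < ⊤)
    (hnsupp : ∀ x ∈ measSupport μ, 0 < n (Set.Iic x) ∧ 0 < n (Set.Ici x))
    (hcompat : (⨆ y : ℝ, Dmu μ n y) = (⨆ x : ℝ, Gmu μ n x))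
    :
    (∫⁻ s in Set.Ioi (0 : ℝ), nPhiMinus μ n s) =
      ∫⁻ s in Set.Iio (0 : ℝ),
        (ENNReal.ofReal (1 + mubarDinv μ n (Gmu μ n s) - (μ (Set.Ici s)).toReal))⁻¹ ∂μ := by
  classical
  by_cases hP : ∃ t : ℝ, t ≤ 0 ∧ n {t} ≠ 0 ∧ PsiR μ n t ≠ psiMinus μ n (-t)
  · obtain ⟨t₀, ht0, hn0, hne⟩ := hP
    have hPsiTop : PsiR μ n t₀ = ⊤ := by
      by_contra hc
      refine hne (PsiR_eq_of_ne_top μ n t₀ ?_)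
      by_contra hc2
      push_neg at hc2
      exact hc (by rw [PsiR]; exact iInf_eq_top.2 hc2)
    have hall : ∀ k : ℕ, psiMinus μ n (-t₀ + 1 / ((k : ℝ) + 1)) = ⊤ := by
      have h := hPsiTop
      rw [PsiR] at h
      exact iInf_eq_top.1 h
    have hpsifin : psiMinus μ n (-t₀) ≠ ⊤ := fun h => hne (hPsiTop.trans h.symm)
    have hL : ∫⁻ l in Set.Ioi (0 : ℝ), nPhiMinus μ n l = ⊤ := by
      rw [stepI μ n hnfin]
      refine top_le_iff.1 ?_
      calc (⊤ : ℝ≥0∞) = PsiR μ n t₀ * n {t₀} := by rw [hPsiTop, ENNReal.top_mul hn0]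
        _ = ∫⁻ t in {t₀}, PsiR μ n t ∂n := (lintegral_singleton _ _).symm
        _ ≤ ∫⁻ t in Set.Iic (0 : ℝ), PsiR μ n t ∂n :=
            lintegral_mono_set (Set.singleton_subset_iff.2 ht0)
    rw [hL, rhs_top_of_bad μ n hnfin hnsupp t₀ ht0 hall hpsifin]
  · push_neg at hP
    have haux : ∀ t₁ t₂ : ℝ, t₁ < t₂ → PsiR μ n t₂ ≠ psiMinus μ n (-t₂) →
        PsiR μ n t₁ ≠ psiMinus μ n (-t₁) → False := by
      intro t₁ t₂ hlt hbad2 hbad1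
      have hTop2 : PsiR μ n t₂ = ⊤ := by
        by_contra hc
        refine hbad2 (PsiR_eq_of_ne_top μ n t₂ ?_)
        by_contra hc2
        push_neg at hc2
        exact hc (by rw [PsiR]; exact iInf_eq_top.2 hc2)
      have hall2 : ∀ k : ℕ, psiMinus μ n (-t₂ + 1 / ((k : ℝ) + 1)) = ⊤ := by
        have h := hTop2
        rw [PsiR] at h
        exact iInf_eq_top.1 h
      obtain ⟨k, hk⟩ := exists_nat_one_div_lt (show (0:ℝ) < t₂ - t₁ by linarith)
      have hψtop : psiMinus μ n (-t₁) = ⊤ :=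
        top_le_iff.1 (by rw [← hall2 k]; exact psiMinus_mono μ n (by linarith))
      have h2 : PsiR μ n t₁ = ⊤ := top_le_iff.1 (hψtop ▸ psiMinus_le_PsiR μ n t₁)
      exact hbad1 (h2.trans hψtop.symm)
    have hnull : n {t : ℝ | t ≤ 0 ∧ PsiR μ n t ≠ psiMinus μ n (-t)} = 0 := by
      set S := {t : ℝ | t ≤ 0 ∧ PsiR μ n t ≠ psiMinus μ n (-t)} with hS
      rcases Set.eq_empty_or_nonempty S with h | h
      · rw [h]; simp
      · obtain ⟨t₀, ht₀⟩ := h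
        have hsub : S ⊆ {t₀} := by
          intro t ht
          rcases lt_trichotomy t t₀ with h' | h' | h'
          · exact (haux t t₀ h' ht₀.2 ht.2).elim
          · exact h'
          · exact (haux t₀ t h' ht.2 ht₀.2).elim
        have hn0 : n {t₀} = 0 := by
          by_contra hc
          exact ht₀.2 (hP t₀ ht₀.1 hc)
        exact measure_mono_null hsub hn0
    have hcong : ∫⁻ t in Set.Iic (0:ℝ), PsiR μ n t ∂n
        = ∫⁻ t in Set.Iic (0:ℝ), psiMinus μ n (-t) ∂n := by
      apply lintegral_congr_ae
      show ∀ᵐ t ∂n.restrict (Set.Iic (0:ℝ)), PsiR μ n t = psiMinus μ n (-t)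
      rw [ae_restrict_iff' measurableSet_Iic, ae_iff]
      have heq : {a : ℝ | ¬(a ∈ Set.Iic (0:ℝ) → PsiR μ n a = psiMinus μ n (-a))}
          = {t : ℝ | t ≤ 0 ∧ PsiR μ n t ≠ psiMinus μ n (-t)} := by
        ext a
        simp only [Set.mem_setOf_eq, Set.mem_Iic, Classical.not_imp]
      rw [heq]
      exact hnull
    calc ∫⁻ s in Set.Ioi (0 : ℝ), nPhiMinus μ n s
        = ∫⁻ t in Set.Iic (0:ℝ), PsiR μ n t ∂n := stepI μ n hnfin
      _ = ∫⁻ t in Set.Iic (0:ℝ), psiMinus μ n (-t) ∂n := hcong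
      _ = ∫⁻ s in Set.Iic (0:ℝ), n (Set.Iic s) * psiMinusIntegrand μ n s ∂μ :=
          stepIII μ n hnfin
      _ = ∫⁻ s in Set.Iio (0:ℝ), n (Set.Iic s) * psiMinusIntegrand μ n s ∂μ := by
          rw [restrict_Iic_eq_Iio μ hatomless]
      _ = _ := stepIV μ n hnfin hnsupp
end

section
/- Set c_μ = D_μ(∞). For all 0 ≤ v₁ ≤ v₂ < c_μ one has μ̄(D_μ⁻¹(v₁)) − μ̄(D_μ⁻¹(v₂)) = ∫_{v₁}^{v₂} n([D_μ⁻¹(v),∞)) dv, and μ̄(G_μ⁻¹(v₂)) − μ̄(G_μ⁻¹(v₁)) = ∫_{v₁}^{v₂} n((−∞,G_μ⁻¹(v)]) dv. -/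
open MeasureTheory Filter
open scoped ENNReal Topology Classical

namespace DerivProofAux

open MeasureTheory Filter Set

lemma meas_nIci (n : MeasureTheory.Measure ℝ) : Measurable fun s : ℝ => n (Set.Ici s) :=
  Antitone.measurable fun _ _ hab => measure_mono (Set.Ici_subset_Ici.2 hab)

lemma meas_nIic (n : MeasureTheory.Measure ℝ) : Measurable fun s : ℝ => n (Set.Iic s) :=
  Monotone.measurable fun _ _ hab => measure_mono (Set.Iic_subset_Iic.2 hab)

noncomputable def gD (n : MeasureTheory.Measure ℝ) : ℝ → ℝ≥0∞ :=
  (Set.Ici (0:ℝ)).indicator fun s => (n (Set.Ici s))⁻¹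

lemma gD_meas (n : MeasureTheory.Measure ℝ) : Measurable (gD n) :=
  ((meas_nIci n).inv).indicator measurableSet_Ici

noncomputable def nuD (μ n : MeasureTheory.Measure ℝ) : MeasureTheory.Measure ℝ :=
  μ.withDensity (gD n)

lemma nuD_def (μ n : MeasureTheory.Measure ℝ) : nuD μ n = μ.withDensity (gD n) := rfl

lemma nuD_apply (μ n : MeasureTheory.Measure ℝ) {S : Set ℝ} (hS : MeasurableSet S) :
    nuD μ n S = ∫⁻ s in Set.Ici 0 ∩ S, (n (Set.Ici s))⁻¹ ∂μ := by
  rw [nuD, withDensity_apply _ hS, gD, lintegral_indicator measurableSet_Ici,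
    Measure.restrict_restrict measurableSet_Ici]

lemma nuD_Iic (μ n : MeasureTheory.Measure ℝ) (y : ℝ) : nuD μ n (Set.Iic y) = Dmu μ n y := by
  rw [nuD_apply μ n measurableSet_Iic, Dmu, Set.Ici_inter_Iic]

lemma nuD_singleton (μ n : MeasureTheory.Measure ℝ) (hatomless : ∀ x : ℝ, μ {x} = 0) (x : ℝ) :
    nuD μ n {x} = 0 := by
  rw [nuD, withDensity_apply _ (measurableSet_singleton x)]
  exact setLIntegral_measure_zero _ _ (hatomless x)

lemma Dmu_mono (μ n : MeasureTheory.Measure ℝ) : Monotone (Dmu μ n) := fun a b hab => by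
  rw [← nuD_Iic μ n, ← nuD_Iic μ n]; exact measure_mono (Set.Iic_subset_Iic.2 hab)

lemma Dmu_neg (μ n : MeasureTheory.Measure ℝ) {y : ℝ} (hy : y < 0) : Dmu μ n y = 0 := by
  rw [Dmu, Set.Icc_eq_empty (not_le.2 hy), Measure.restrict_empty, lintegral_zero_measure]

lemma measSupport_compl_null (μ : MeasureTheory.Measure ℝ) : μ (measSupport μ)ᶜ = 0 := by
  have main : (measSupport μ)ᶜ ⊆
      ⋃ (pq : ℚ × ℚ) (_ : μ (Set.Ioo (pq.1 : ℝ) (pq.2 : ℝ)) = 0),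
        Set.Ioo (pq.1 : ℝ) (pq.2 : ℝ) := by
    intro x hx
    have hx' : ¬ ∀ U : Set ℝ, IsOpen U → x ∈ U → 0 < μ U := hx
    push_neg at hx'
    obtain ⟨U, hU, hxU, hμU⟩ := hx'
    have hμU0 : μ U = 0 := le_zero_iff.1 hμU
    obtain ⟨ε, hε, hball⟩ := Metric.isOpen_iff.1 hU x hxU
    obtain ⟨p, hp1, hp2⟩ := exists_rat_btwn (show x - ε < x by linarith)
    obtain ⟨q, hq1, hq2⟩ := exists_rat_btwn (show x < x + ε by linarith)
    have hsub : Set.Ioo (p : ℝ) (q : ℝ) ⊆ U := by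
      intro z hz
      apply hball
      rw [Metric.mem_ball, Real.dist_eq, abs_lt]
      obtain ⟨hz1, hz2⟩ := hz
      constructor <;> linarith
    exact Set.mem_iUnion.2 ⟨(p, q), Set.mem_iUnion.2
      ⟨measure_mono_null hsub hμU0, ⟨hp2, hq1⟩⟩⟩
  exact measure_mono_null main (measure_iUnion_null fun pq => measure_iUnion_null fun h => h)

lemma ae_mem_measSupport (μ : MeasureTheory.Measure ℝ) : ∀ᵐ x ∂μ, x ∈ measSupport μ := by
  rw [MeasureTheory.ae_iff]
  exact measSupport_compl_null μ

lemma nuD_univ (μ n : MeasureTheory.Measure ℝ) : nuD μ n Set.univ = ⨆ y, Dmu μ n y := by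
  refine le_antisymm ?_
    (iSup_le fun y => by rw [← nuD_Iic μ n y]; exact measure_mono (Set.subset_univ _))
  have huniv : (Set.univ : Set ℝ) = ⋃ k : ℕ, Set.Iic (k : ℝ) := by
    ext x
    simp only [Set.mem_univ, Set.mem_iUnion, Set.mem_Iic, true_iff]
    exact exists_nat_ge x
  rw [huniv, Monotone.measure_iUnion (fun a b hab => Set.Iic_subset_Iic.2 (Nat.cast_le.2 hab))]
  exact iSup_le fun k => (nuD_Iic μ n k) ▸ le_iSup (Dmu μ n) (k : ℝ)

lemma DinvSet_bddBelow (μ n : MeasureTheory.Measure ℝ) (w : ℝ≥0∞) :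
    BddBelow (DinvSet μ n w) := ⟨0, fun _ hy => hy.1⟩

lemma DinvSet_mono (μ n : MeasureTheory.Measure ℝ) {w w' : ℝ≥0∞} (h : w ≤ w') :
    DinvSet μ n w' ⊆ DinvSet μ n w :=
  fun _ hy => ⟨hy.1, lt_of_le_of_lt h hy.2⟩

lemma DinvSet_nonempty (μ n : MeasureTheory.Measure ℝ) {w : ℝ≥0∞}
    (hw : w < ⨆ y, Dmu μ n y) : (DinvSet μ n w).Nonempty := by
  obtain ⟨y, hy⟩ := lt_iSup_iff.1 hw
  rcases le_or_gt 0 y with h0 | h0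
  · exact ⟨y, h0, hy⟩
  · rw [Dmu_neg μ n h0] at hy
    exact absurd hy (by simp)

lemma DinvSet_upset (μ n : MeasureTheory.Measure ℝ) {w : ℝ≥0∞} {y y' : ℝ}
    (hy : y ∈ DinvSet μ n w) (h : y ≤ y') : y' ∈ DinvSet μ n w :=
  ⟨hy.1.trans h, lt_of_lt_of_le hy.2 (Dmu_mono μ n h)⟩

lemma mem_of_sInf_lt (μ n : MeasureTheory.Measure ℝ) {w : ℝ≥0∞} {y : ℝ}
    (hne : (DinvSet μ n w).Nonempty) (h : sInf (DinvSet μ n w) < y) : y ∈ DinvSet μ n w := by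
  obtain ⟨a, ha, hay⟩ := exists_lt_of_csInf_lt hne h
  exact DinvSet_upset μ n ha hay.le

lemma sInf_DinvSet_nonneg (μ n : MeasureTheory.Measure ℝ) {w : ℝ≥0∞}
    (hne : (DinvSet μ n w).Nonempty) : 0 ≤ sInf (DinvSet μ n w) :=
  le_csInf hne fun _ hy => hy.1

lemma Dmu_le_of_lt_sInf (μ n : MeasureTheory.Measure ℝ) {w : ℝ≥0∞} {y : ℝ}
    (h : y < sInf (DinvSet μ n w)) : Dmu μ n y ≤ w := by
  rcases lt_or_ge y 0 with h0 | h0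
  · rw [Dmu_neg μ n h0]; exact zero_le
  · by_contra hc
    exact absurd (csInf_le (DinvSet_bddBelow μ n w) ⟨h0, not_le.1 hc⟩) (not_le.2 h)

lemma meas_Iic_eq_Iio {m : MeasureTheory.Measure ℝ} {a : ℝ} (h : m {a} = 0) :
    m (Set.Iic a) = m (Set.Iio a) := by
  refine le_antisymm ?_ (measure_mono Set.Iio_subset_Iic_self)
  calc m (Set.Iic a) ≤ m (Set.Iio a ∪ {a}) := by
        refine measure_mono fun x hx => ?_
        simp only [Set.mem_union, Set.mem_Iio, Set.mem_singleton_iff]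
        exact lt_or_eq_of_le hx
    _ ≤ m (Set.Iio a) + m {a} := measure_union_le _ _
    _ = m (Set.Iio a) := by rw [h, add_zero]

lemma meas_Ici_eq_Ioi {m : MeasureTheory.Measure ℝ} {a : ℝ} (h : m {a} = 0) :
    m (Set.Ici a) = m (Set.Ioi a) := by
  refine le_antisymm ?_ (measure_mono Set.Ioi_subset_Ici_self)
  calc m (Set.Ici a) ≤ m (Set.Ioi a ∪ {a}) := by
        refine measure_mono fun x hx => ?_
        simp only [Set.mem_union, Set.mem_Ioi, Set.mem_singleton_iff]
        rcases lt_or_eq_of_le (Set.mem_Ici.1 hx) with h' | h'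
        · exact Or.inl h'
        · exact Or.inr h'.symm
    _ ≤ m (Set.Ioi a) + m {a} := measure_union_le _ _
    _ = m (Set.Ioi a) := by rw [h, add_zero]

lemma Dmu_sInf_le (μ n : MeasureTheory.Measure ℝ) (hatomless : ∀ x : ℝ, μ {x} = 0) {w : ℝ≥0∞}
    (hne : (DinvSet μ n w).Nonempty) : Dmu μ n (sInf (DinvSet μ n w)) ≤ w := by
  set T := sInf (DinvSet μ n w) with hT
  have hIio : nuD μ n (Set.Iio T) ≤ w := by
    have hU : Set.Iio T = ⋃ k : ℕ, Set.Iic (T - 1 / (k + 1)) := by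
      ext x
      simp only [Set.mem_Iio, Set.mem_iUnion, Set.mem_Iic]
      constructor
      · intro hx
        obtain ⟨k, hk⟩ := exists_nat_one_div_lt (sub_pos.2 hx)
        exact ⟨k, by linarith⟩
      · rintro ⟨k, hk⟩
        have hpos : (0:ℝ) < 1 / ((k:ℝ) + 1) := by positivity
        linarith
    rw [hU, Monotone.measure_iUnion ?mono]
    case mono =>
      intro a b hab x hx
      simp only [Set.mem_Iic] at hx ⊢
      have h1 : (a:ℝ) + 1 ≤ (b:ℝ) + 1 := by exact_mod_cast Nat.succ_le_succ hab
      have h2 : (1:ℝ)/((b:ℝ)+1) ≤ 1/((a:ℝ)+1) := one_div_le_one_div_of_le (by positivity) h1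
      linarith
    refine iSup_le fun k => ?_
    rw [nuD_Iic]
    apply Dmu_le_of_lt_sInf μ n
    rw [← hT]
    have hpos : (0:ℝ) < 1 / ((k:ℝ) + 1) := by positivity
    linarith
  have h1 : nuD μ n (Set.Iic T) = nuD μ n (Set.Iio T) :=
    meas_Iic_eq_Iio (nuD_singleton μ n hatomless T)
  rw [← nuD_Iic μ n T, h1]
  exact hIio

lemma Dmu_rc (μ n : MeasureTheory.Measure ℝ) [MeasureTheory.IsProbabilityMeasure μ] {s : ℝ}
    {y₀ : ℝ} (hy₀ : s < y₀) (hn : n (Set.Ici y₀) ≠ 0) {w : ℝ≥0∞}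
    (hw : ∀ y, s < y → w ≤ Dmu μ n y) : w ≤ Dmu μ n s := by
  refine ENNReal.le_of_forall_pos_le_add fun ε hε _ => ?_
  set C : ℝ≥0∞ := (n (Set.Ici y₀))⁻¹ with hC
  have hC_ne_top : C ≠ ⊤ := by
    rw [hC]
    exact ENNReal.inv_ne_top.2 hn
  have hIempty : ⋂ k : ℕ, Set.Ioc s (s + 1 / (k + 1)) = ∅ := by
    rw [Set.eq_empty_iff_forall_notMem]
    intro x hx
    simp only [Set.mem_iInter, Set.mem_Ioc] at hx
    obtain ⟨k, hk⟩ := exists_nat_one_div_lt (sub_pos.2 (hx 0).1)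
    have h2 := (hx k).2
    linarith
  have hanti : Antitone fun k : ℕ => Set.Ioc s (s + 1 / (k + 1 : ℝ)) := by
    intro a b hab x hx
    simp only [Set.mem_Ioc] at hx ⊢
    have h1 : (a:ℝ) + 1 ≤ (b:ℝ) + 1 := by exact_mod_cast Nat.succ_le_succ hab
    have h2 : (1:ℝ)/((b:ℝ)+1) ≤ 1/((a:ℝ)+1) := one_div_le_one_div_of_le (by positivity) h1
    exact ⟨hx.1, by linarith [hx.2]⟩
  have ht : Tendsto (fun k : ℕ => μ (Set.Ioc s (s + 1 / (k + 1)))) atTop (𝓝 0) := by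
    have h := tendsto_measure_iInter_atTop (μ := μ)
      (fun _ => measurableSet_Ioc.nullMeasurableSet) hanti ⟨0, measure_ne_top μ _⟩
    rw [hIempty] at h
    simpa [Function.comp_def] using h
  have htC : Tendsto (fun k : ℕ => C * μ (Set.Ioc s (s + 1 / (k + 1)))) atTop (𝓝 0) := by
    have h := ENNReal.Tendsto.const_mul ht (Or.inr hC_ne_top)
    simpa using h
  have h1 : ∀ᶠ k : ℕ in atTop, C * μ (Set.Ioc s (s + 1 / (k + 1))) < (ε : ℝ≥0∞) :=
    Filter.Tendsto.eventually_lt_const (by exact_mod_cast hε) htC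
  have h2 : ∀ᶠ k : ℕ in atTop, s + 1 / (k + 1 : ℝ) ≤ y₀ := by
    obtain ⟨k₀, hk₀⟩ := exists_nat_one_div_lt (sub_pos.2 hy₀)
    refine Filter.eventually_atTop.2 ⟨k₀, fun k hk => ?_⟩
    have ha : (k₀:ℝ) + 1 ≤ (k:ℝ) + 1 := by exact_mod_cast Nat.succ_le_succ hk
    have hb : (1:ℝ)/((k:ℝ)+1) ≤ 1/((k₀:ℝ)+1) := one_div_le_one_div_of_le (by positivity) ha
    linarith
  obtain ⟨k, hk1, hk2⟩ := (h1.and h2).exists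
  have hklt : s < s + 1 / ((k:ℝ)+1) := lt_add_of_pos_right s (by positivity)
  calc w ≤ Dmu μ n (s + 1/((k:ℝ)+1)) := hw _ hklt
    _ = Dmu μ n s + nuD μ n (Set.Ioc s (s + 1/((k:ℝ)+1))) := by
        rw [← nuD_Iic, ← nuD_Iic, ← Set.Iic_union_Ioc_eq_Iic hklt.le,
          measure_union (Set.Iic_disjoint_Ioc le_rfl) measurableSet_Ioc]
    _ ≤ Dmu μ n s + C * μ (Set.Ioc s (s + 1/((k:ℝ)+1))) := by
        gcongr
        rw [nuD, withDensity_apply _ measurableSet_Ioc]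
        calc ∫⁻ x in Set.Ioc s (s + 1/((k:ℝ)+1)), gD n x ∂μ
            ≤ ∫⁻ _ in Set.Ioc s (s + 1/((k:ℝ)+1)), C ∂μ := by
              refine setLIntegral_mono' measurableSet_Ioc fun x hx => ?_
              rcases le_or_gt 0 x with h0 | h0
              · rw [gD, Set.indicator_of_mem (Set.mem_Ici.2 h0)]
                rw [hC]
                exact ENNReal.inv_le_inv.2
                  (measure_mono (Set.Ici_subset_Ici.2 (hx.2.trans hk2)))
              · rw [gD, Set.indicator_of_notMem (by simpa using h0)]
                exact zero_le
          _ = C * μ (Set.Ioc s (s + 1/((k:ℝ)+1))) := setLIntegral_const _ _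
    _ ≤ Dmu μ n s + ↑ε := add_le_add le_rfl hk1.le

lemma exists_pos_right (μ n : MeasureTheory.Measure ℝ)
    (hsupp : ∀ x ∈ measSupport μ, 0 < n (Set.Ici x)) {s : ℝ}
    (hs : Dmu μ n s < ⨆ y, Dmu μ n y) : ∃ y₀, s < y₀ ∧ n (Set.Ici y₀) ≠ 0 := by
  by_contra hcon
  push_neg at hcon
  have hμ : μ (Set.Ioi s) = 0 := by
    refine measure_mono_null (fun x hx => ?_) (measSupport_compl_null μ)
    show x ∉ measSupport μ
    intro hxs
    exact absurd (hcon x hx) (ne_of_gt (hsupp x hxs))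
  have hν : nuD μ n (Set.Ioi s) = 0 :=
    MeasureTheory.withDensity_absolutelyContinuous μ (gD n) hμ
  have hle : (⨆ y, Dmu μ n y) ≤ Dmu μ n s := by
    rw [← nuD_univ μ n, ← Set.Iic_union_Ioi (a := s)]
    refine le_trans (measure_union_le _ _) ?_
    rw [hν, add_zero, nuD_Iic]
  exact absurd (lt_of_lt_of_le hs hle) (lt_irrefl _)

lemma Dmu_sInf_eq (μ n : MeasureTheory.Measure ℝ) [MeasureTheory.IsProbabilityMeasure μ]
    (hatomless : ∀ x : ℝ, μ {x} = 0)
    (hsupp : ∀ x ∈ measSupport μ, 0 < n (Set.Ici x)) {w : ℝ≥0∞}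
    (hw : w < ⨆ y, Dmu μ n y) : Dmu μ n (sInf (DinvSet μ n w)) = w := by
  have hne := DinvSet_nonempty μ n hw
  have hle : Dmu μ n (sInf (DinvSet μ n w)) ≤ w := Dmu_sInf_le μ n hatomless hne
  refine le_antisymm hle ?_
  have hlt : Dmu μ n (sInf (DinvSet μ n w)) < ⨆ y, Dmu μ n y := lt_of_le_of_lt hle hw
  obtain ⟨y₀, hy₀, hn0⟩ := exists_pos_right μ n hsupp hlt
  exact Dmu_rc μ n hy₀ hn0 fun y hy => (mem_of_sInf_lt μ n hne hy).2.le


lemma core (μ n : MeasureTheory.Measure ℝ) [MeasureTheory.IsProbabilityMeasure μ]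
    (hatomless : ∀ x : ℝ, μ {x} = 0)
    (hfin : ∀ s : ℝ, 0 < s → n (Set.Ici s) < ⊤)
    (hsupp : ∀ x ∈ measSupport μ, 0 < n (Set.Ici x))
    (v₁ v₂ : ℝ) (hv₁ : 0 ≤ v₁) (hv₁₂ : v₁ ≤ v₂)
    (hv₂ : ENNReal.ofReal v₂ < ⨆ y : ℝ, Dmu μ n y) :
    ENNReal.ofReal (mubarDinv μ n (ENNReal.ofReal v₁) - mubarDinv μ n (ENNReal.ofReal v₂))
      = ∫⁻ v in Set.Ioo v₁ v₂, nDinv μ n (ENNReal.ofReal v) := by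
  have hv₂0 : 0 ≤ v₂ := hv₁.trans hv₁₂
  set w₁ := ENNReal.ofReal v₁ with hw₁def
  set w₂ := ENNReal.ofReal v₂ with hw₂def
  have hw₁₂ : w₁ ≤ w₂ := ENNReal.ofReal_le_ofReal hv₁₂
  have hw₁ : w₁ < ⨆ y, Dmu μ n y := lt_of_le_of_lt hw₁₂ hv₂
  have hne₁ := DinvSet_nonempty μ n hw₁
  have hne₂ := DinvSet_nonempty μ n hv₂
  set y₁ := sInf (DinvSet μ n w₁) with hy₁def
  set y₂ := sInf (DinvSet μ n w₂) with hy₂def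
  have hy₁₂ : y₁ ≤ y₂ := csInf_le_csInf (DinvSet_bddBelow μ n w₁) hne₂ (DinvSet_mono μ n hw₁₂)
  have hy₁0 : 0 ≤ y₁ := sInf_DinvSet_nonneg μ n hne₁
  have hD₁ : Dmu μ n y₁ = w₁ := Dmu_sInf_eq μ n hatomless hsupp hw₁
  have hD₂ : Dmu μ n y₂ = w₂ := Dmu_sInf_eq μ n hatomless hsupp hv₂
  -- LHS
  have hLHS : ENNReal.ofReal (mubarDinv μ n w₁ - mubarDinv μ n w₂) = μ (Set.Icc y₁ y₂) := by
    rw [mubarDinv, if_pos hne₁, mubarDinv, if_pos hne₂, ← hy₁def, ← hy₂def]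
    have hsplit : μ (Set.Ici y₁) = μ (Set.Icc y₁ y₂) + μ (Set.Ioi y₂) := by
      have hdisj : Disjoint (Set.Icc y₁ y₂) (Set.Ioi y₂) :=
        Set.disjoint_left.2 fun x hx hx' => absurd hx.2 (not_le.2 hx')
      rw [← Set.Icc_union_Ioi_eq_Ici hy₁₂, measure_union hdisj measurableSet_Ioi]
    have hIci₂ : μ (Set.Ici y₂) = μ (Set.Ioi y₂) := meas_Ici_eq_Ioi (hatomless y₂)
    rw [hsplit, hIci₂, ENNReal.toReal_add (measure_ne_top μ _) (measure_ne_top μ _),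
      add_sub_cancel_right, ENNReal.ofReal_toReal (measure_ne_top μ _)]
  rw [hLHS]
  -- RHS setup
  set T : ℝ → ℝ := fun v => sInf (DinvSet μ n (ENNReal.ofReal (min v v₂))) with hTdef
  have hTv : ∀ v : ℝ, v ≤ v₂ → T v = sInf (DinvSet μ n (ENNReal.ofReal v)) := by
    intro v hv
    rw [hTdef]
    dsimp only
    rw [min_eq_left hv]
  have hTset_ne : ∀ v : ℝ, (DinvSet μ n (ENNReal.ofReal (min v v₂))).Nonempty := fun v =>
    DinvSet_nonempty μ n (lt_of_le_of_lt (ENNReal.ofReal_le_ofReal (min_le_right _ _)) hv₂)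
  have hTmono : Monotone T := by
    intro a b hab
    rw [hTdef]
    dsimp only
    exact csInf_le_csInf (DinvSet_bddBelow μ n _) (hTset_ne b)
      (DinvSet_mono μ n (ENNReal.ofReal_le_ofReal (min_le_min_right _ hab)))
  have hTmeas : Measurable T := hTmono.measurable
  have hTy₂ : ∀ v : ℝ, T v ≤ y₂ := by
    intro v
    rw [hTdef]
    dsimp only
    exact csInf_le_csInf (DinvSet_bddBelow μ n _) hne₂
      (DinvSet_mono μ n (ENNReal.ofReal_le_ofReal (min_le_right _ _)))
  have hTy₁ : ∀ v : ℝ, v₁ ≤ v → y₁ ≤ T v := by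
    intro v hv
    rw [hTdef]
    dsimp only
    exact csInf_le_csInf (DinvSet_bddBelow μ n _) (hTset_ne v)
      (DinvSet_mono μ n (ENNReal.ofReal_le_ofReal (le_min hv hv₁₂)))
  have hstep1 : ∫⁻ v in Set.Ioo v₁ v₂, nDinv μ n (ENNReal.ofReal v)
      = ∫⁻ v in Set.Ioo v₁ v₂, n (Set.Ici (T v)) := by
    refine setLIntegral_congr_fun measurableSet_Ioo (fun v hv => ?_)
    have hnev : (DinvSet μ n (ENNReal.ofReal v)).Nonempty :=
      DinvSet_nonempty μ n (lt_of_le_of_lt (ENNReal.ofReal_le_ofReal hv.2.le) hv₂)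
    rw [nDinv, if_pos hnev, hTv v hv.2.le]
  rw [hstep1]
  have hstep2 : ∫⁻ v in Set.Ioo v₁ v₂, n (Set.Ici (T v))
      = ∫⁻ u, n (Set.Ici u) ∂(Measure.map T (volume.restrict (Set.Ioo v₁ v₂))) :=
    (lintegral_map (meas_nIci n) hTmeas).symm
  rw [hstep2]
  -- formula for nuD of Icc intervals
  have hIio_y₁ : nuD μ n (Set.Iio y₁) = w₁ := by
    rw [← meas_Iic_eq_Iio (nuD_singleton μ n hatomless y₁), nuD_Iic, hD₁]
  have hIcc_formula : ∀ t : ℝ, y₁ ≤ t → w₁ + nuD μ n (Set.Icc y₁ t) = Dmu μ n t := by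
    intro t ht
    have hsplit : nuD μ n (Set.Iic t) = nuD μ n (Set.Iio y₁) + nuD μ n (Set.Icc y₁ t) := by
      have hdisj : Disjoint (Set.Iio y₁) (Set.Icc y₁ t) :=
        Set.disjoint_left.2 fun x hx hx' => absurd hx'.1 (not_le.2 hx)
      rw [← Set.Iio_union_Icc_eq_Iic ht, measure_union hdisj measurableSet_Icc]
    rw [← nuD_Iic μ n t, hsplit, hIio_y₁]
  -- the pushforward identity
  have hmap : Measure.map T (volume.restrict (Set.Ioo v₁ v₂))
      = (nuD μ n).restrict (Set.Icc y₁ y₂) := by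
    haveI hfin1 : IsFiniteMeasure (Measure.map T (volume.restrict (Set.Ioo v₁ v₂))) := by
      constructor
      rw [Measure.map_apply hTmeas MeasurableSet.univ, Set.preimage_univ,
        Measure.restrict_apply_univ, Real.volume_Ioo]
      exact ENNReal.ofReal_lt_top
    have hνIcc_le : nuD μ n (Set.Icc y₁ y₂) ≤ w₂ := by
      rw [← hD₂, ← nuD_Iic]
      exact measure_mono fun x hx => hx.2
    haveI hfin2 : IsFiniteMeasure ((nuD μ n).restrict (Set.Icc y₁ y₂)) := by
      constructor
      rw [Measure.restrict_apply_univ]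
      exact lt_of_le_of_lt hνIcc_le ENNReal.ofReal_lt_top
    refine Measure.ext_of_Iic _ _ fun s => ?_
    rw [Measure.map_apply hTmeas measurableSet_Iic,
      Measure.restrict_apply (hTmeas measurableSet_Iic),
      Measure.restrict_apply measurableSet_Iic]
    rcases lt_or_ge s y₁ with hs | hs
    · have h1 : T ⁻¹' Set.Iic s ∩ Set.Ioo v₁ v₂ = ∅ := by
        rw [Set.eq_empty_iff_forall_notMem]
        rintro v ⟨hTs, hv⟩
        exact absurd (Set.mem_Iic.1 hTs) (not_le.2 (lt_of_lt_of_le hs (hTy₁ v hv.1.le)))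
      have h2 : Set.Iic s ∩ Set.Icc y₁ y₂ = ∅ := by
        rw [Set.eq_empty_iff_forall_notMem]
        rintro x ⟨hxs, hx⟩
        exact absurd (Set.mem_Iic.1 hxs) (not_le.2 (lt_of_lt_of_le hs hx.1))
      rw [h1, h2, measure_empty, measure_empty]
    · rcases lt_or_ge s y₂ with hs2 | hs2
      · -- y₁ ≤ s < y₂
        have hs0 : 0 ≤ s := hy₁0.trans hs
        have hDs_le : Dmu μ n s ≤ w₂ := Dmu_le_of_lt_sInf μ n (hy₂def ▸ hs2)
        have hDs_ge : w₁ ≤ Dmu μ n s := hD₁ ▸ Dmu_mono μ n hs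
        have hDs_ne : Dmu μ n s ≠ ⊤ := (lt_of_le_of_lt hDs_le ENNReal.ofReal_lt_top).ne
        set t := (Dmu μ n s).toReal with htdef
        have hts : ENNReal.ofReal t = Dmu μ n s := ENNReal.ofReal_toReal hDs_ne
        have ht1 : v₁ ≤ t :=
          (ENNReal.ofReal_le_ofReal_iff ENNReal.toReal_nonneg).1 (by rw [hts]; exact hDs_ge)
        have ht2 : t ≤ v₂ := (ENNReal.ofReal_le_ofReal_iff hv₂0).1 (by rw [hts]; exact hDs_le)
        have hIccIic : Set.Iic s ∩ Set.Icc y₁ y₂ = Set.Icc y₁ s := by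
          ext x
          simp only [Set.mem_inter_iff, Set.mem_Iic, Set.mem_Icc]
          constructor
          · rintro ⟨h1, h2, _⟩; exact ⟨h2, h1⟩
          · rintro ⟨h1, h2⟩; exact ⟨h2, h1, h2.trans hs2.le⟩
        have hsub1 : Set.Ioo v₁ t ⊆ T ⁻¹' Set.Iic s ∩ Set.Ioo v₁ v₂ := by
          intro v hv
          have hvv₂ : v < v₂ := lt_of_lt_of_le hv.2 ht2
          have hv0 : 0 ≤ v := hv₁.trans hv.1.le
          refine ⟨?_, hv.1, hvv₂⟩
          show T v ≤ s
          have hlt : ENNReal.ofReal v < Dmu μ n s := by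
            rw [← hts]
            exact (ENNReal.ofReal_lt_ofReal_iff (lt_of_le_of_lt hv0 hv.2)).2 hv.2
          rw [hTv v hvv₂.le]
          exact csInf_le (DinvSet_bddBelow μ n _) ⟨hs0, hlt⟩
        have hsub2 : T ⁻¹' Set.Iic s ∩ Set.Ioo v₁ v₂ ⊆ Set.Ioc v₁ t := by
          rintro v ⟨hTvs, hv⟩
          refine ⟨hv.1, ?_⟩
          have hv0 : 0 ≤ v := hv₁.trans hv.1.le
          have hSne : (DinvSet μ n (ENNReal.ofReal v)).Nonempty :=
            DinvSet_nonempty μ n (lt_of_le_of_lt (ENNReal.ofReal_le_ofReal hv.2.le) hv₂)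
          have hkey : ENNReal.ofReal v ≤ Dmu μ n s := by
            obtain ⟨y₀, hy₀, hn0⟩ := exists_pos_right μ n hsupp (lt_of_le_of_lt hDs_le hv₂)
            refine Dmu_rc μ n hy₀ hn0 fun y hy => ?_
            have hsy : sInf (DinvSet μ n (ENNReal.ofReal v)) < y := by
              calc sInf (DinvSet μ n (ENNReal.ofReal v)) = T v := (hTv v hv.2.le).symm
                _ ≤ s := Set.mem_Iic.1 hTvs
                _ < y := hy
            exact (mem_of_sInf_lt μ n hSne hsy).2.le
          exact (ENNReal.ofReal_le_ofReal_iff ENNReal.toReal_nonneg).1 (by rw [hts]; exact hkey)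
        have hvol : volume (T ⁻¹' Set.Iic s ∩ Set.Ioo v₁ v₂) = ENNReal.ofReal (t - v₁) := by
          refine le_antisymm ?_ ?_
          · calc volume (T ⁻¹' Set.Iic s ∩ Set.Ioo v₁ v₂) ≤ volume (Set.Ioc v₁ t) :=
                measure_mono hsub2
              _ = ENNReal.ofReal (t - v₁) := Real.volume_Ioc
          · calc ENNReal.ofReal (t - v₁) = volume (Set.Ioo v₁ t) := Real.volume_Ioo.symm
              _ ≤ volume (T ⁻¹' Set.Iic s ∩ Set.Ioo v₁ v₂) := measure_mono hsub1
        rw [hvol, hIccIic]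
        have h3 := hIcc_formula s hs
        have h4 : w₁ + ENNReal.ofReal (t - v₁) = Dmu μ n s := by
          rw [hw₁def, ← ENNReal.ofReal_add hv₁ (sub_nonneg.2 ht1),
            show v₁ + (t - v₁) = t by ring, hts]
        exact (ENNReal.add_right_inj ENNReal.ofReal_ne_top).1 (h4.trans h3.symm)
      · -- y₂ ≤ s
        have hIccIic : Set.Iic s ∩ Set.Icc y₁ y₂ = Set.Icc y₁ y₂ :=
          Set.inter_eq_right.2 fun x hx => Set.mem_Iic.2 (hx.2.trans hs2)
        have hpre : T ⁻¹' Set.Iic s ∩ Set.Ioo v₁ v₂ = Set.Ioo v₁ v₂ :=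
          Set.inter_eq_right.2 fun v _ => Set.mem_Iic.2 ((hTy₂ v).trans hs2)
        rw [hpre, hIccIic, Real.volume_Ioo]
        have h3 := hIcc_formula y₂ hy₁₂
        rw [hD₂] at h3
        have h4 : w₁ + ENNReal.ofReal (v₂ - v₁) = w₂ := by
          rw [hw₁def, hw₂def, ← ENNReal.ofReal_add hv₁ (sub_nonneg.2 hv₁₂),
            show v₁ + (v₂ - v₁) = v₂ by ring]
        exact (ENNReal.add_right_inj ENNReal.ofReal_ne_top).1 (h4.trans h3.symm)
  rw [hmap]
  -- final computation
  rw [nuD_def, restrict_withDensity measurableSet_Icc,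
    lintegral_withDensity_eq_lintegral_mul _ (gD_meas n) (meas_nIci n)]
  have hae : ∀ᵐ u ∂(μ.restrict (Set.Icc y₁ y₂)), (gD n * fun u => n (Set.Ici u)) u = 1 := by
    rw [MeasureTheory.ae_restrict_iff' measurableSet_Icc]
    have h1 : ∀ᵐ u ∂μ, u ∈ measSupport μ := ae_mem_measSupport μ
    have h2 : ∀ᵐ u ∂μ, u ≠ (0:ℝ) := by
      rw [MeasureTheory.ae_iff]
      simpa using hatomless 0
    filter_upwards [h1, h2] with u hu hu0 hmem
    have hupos : 0 < u := lt_of_le_of_ne (hy₁0.trans hmem.1) (Ne.symm hu0)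
    simp only [Pi.mul_apply]
    rw [gD, Set.indicator_of_mem (Set.mem_Ici.2 hupos.le)]
    exact ENNReal.inv_mul_cancel (ne_of_gt (hsupp u hu)) (hfin u hupos).ne
  rw [lintegral_congr_ae hae, lintegral_one, Measure.restrict_apply_univ]


lemma preimage_neg_Ici (t : ℝ) : (fun x : ℝ => -x) ⁻¹' Set.Ici t = Set.Iic (-t) := by
  ext x
  simp only [Set.mem_preimage, Set.mem_Ici, Set.mem_Iic, le_neg]

lemma preimage_neg_Icc (a b : ℝ) :
    (fun x : ℝ => -x) ⁻¹' Set.Icc a b = Set.Icc (-b) (-a) := by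
  ext x
  simp only [Set.mem_preimage, Set.mem_Icc, le_neg, neg_le]
  exact and_comm

lemma Dmu_reflect (μ n : MeasureTheory.Measure ℝ) (y : ℝ) :
    Dmu (Measure.map (fun x : ℝ => -x) μ) (Measure.map (fun x : ℝ => -x) n) y
      = Gmu μ n (-y) := by
  rw [Dmu]
  have h1 : ∀ s : ℝ, (Measure.map (fun x : ℝ => -x) n) (Set.Ici s) = n (Set.Iic (-s)) :=
    fun s => by rw [Measure.map_apply measurable_neg measurableSet_Ici, preimage_neg_Ici]
  calc ∫⁻ s in Set.Icc (0:ℝ) y, ((Measure.map (fun x : ℝ => -x) n) (Set.Ici s))⁻¹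
        ∂(Measure.map (fun x : ℝ => -x) μ)
      = ∫⁻ s in Set.Icc (0:ℝ) y, (n (Set.Iic (-s)))⁻¹
        ∂(Measure.map (fun x : ℝ => -x) μ) := by
        refine setLIntegral_congr_fun measurableSet_Icc (fun s _ => ?_)
        rw [h1]
    _ = ∫⁻ x in (fun x : ℝ => -x) ⁻¹' Set.Icc (0:ℝ) y, (n (Set.Iic (-(-x))))⁻¹ ∂μ := by
        have hfm : Measurable fun s : ℝ => (n (Set.Iic (-s)))⁻¹ := by
          exact ((meas_nIic n).comp measurable_neg).inv
        have hg : Measurable fun x : ℝ => -x := measurable_neg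
        exact setLIntegral_map measurableSet_Icc hfm hg
    _ = ∫⁻ x in Set.Icc (-y) 0, (n (Set.Iic x))⁻¹ ∂μ := by
        rw [preimage_neg_Icc]
        simp only [neg_neg, neg_zero]
    _ = Gmu μ n (-y) := rfl

lemma DinvSet_reflect (μ n : MeasureTheory.Measure ℝ) (w : ℝ≥0∞) :
    DinvSet (Measure.map (fun x : ℝ => -x) μ) (Measure.map (fun x : ℝ => -x) n) w
      = -(GinvSet μ n w) := by
  ext y
  simp only [DinvSet, GinvSet, Set.mem_setOf_eq, Set.mem_neg, Dmu_reflect, neg_nonpos]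

lemma GinvSet_nonempty_iff (μ n : MeasureTheory.Measure ℝ) (w : ℝ≥0∞) :
    (GinvSet μ n w).Nonempty ↔
    (DinvSet (Measure.map (fun x : ℝ => -x) μ) (Measure.map (fun x : ℝ => -x) n) w).Nonempty := by
  rw [DinvSet_reflect]
  constructor
  · rintro ⟨x, hx⟩
    exact ⟨-x, by simpa using hx⟩
  · rintro ⟨x, hx⟩
    exact ⟨-x, hx⟩

lemma sInf_reflect (μ n : MeasureTheory.Measure ℝ) (w : ℝ≥0∞) :
    sInf (DinvSet (Measure.map (fun x : ℝ => -x) μ) (Measure.map (fun x : ℝ => -x) n) w)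
      = -sSup (GinvSet μ n w) := by
  rw [DinvSet_reflect, Real.sInf_def, neg_neg]

lemma measSupport_reflect (μ : MeasureTheory.Measure ℝ) {x : ℝ}
    (hx : x ∈ measSupport (Measure.map (fun x : ℝ => -x) μ)) : -x ∈ measSupport μ := by
  intro V hV hxV
  have hU : IsOpen ((fun x : ℝ => -x) ⁻¹' V) := hV.preimage continuous_neg
  have hxU : x ∈ (fun x : ℝ => -x) ⁻¹' V := hxV
  have h2 := hx _ hU hxU
  have hpre : (fun x : ℝ => -x) ⁻¹' ((fun x : ℝ => -x) ⁻¹' V) = V := by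
    ext z
    simp
  rwa [Measure.map_apply measurable_neg hU.measurableSet, hpre] at h2

end DerivProofAux
/-- Set `c_μ = D_μ(∞)` (the limit of the non-decreasing function `D_μ`,
i.e. `⨆ y, D_μ(y)`).  For all `0 ≤ v₁ ≤ v₂ < c_μ`:
`μ̄(D_μ⁻¹(v₁)) − μ̄(D_μ⁻¹(v₂)) = ∫_{v₁}^{v₂} n([D_μ⁻¹(v),∞)) dv` and
`μ̄(G_μ⁻¹(v₂)) − μ̄(G_μ⁻¹(v₁)) = ∫_{v₁}^{v₂} n((−∞,G_μ⁻¹(v)]) dv`. -/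
theorem derivativesOfComposedTails
    (μ n : MeasureTheory.Measure ℝ) [MeasureTheory.IsProbabilityMeasure μ]
    (hatomless : ∀ x : ℝ, μ {x} = 0)
    (hneg : 0 < μ (Set.Iio (0 : ℝ))) (hpos : 0 < μ (Set.Ioi (0 : ℝ)))
    (hnfin : ∀ s : ℝ, 0 < s → n (Set.Ici s) < ⊤ ∧ n (Set.Iic (-s)) < ⊤)
    (hnsupp : ∀ x ∈ measSupport μ, 0 < n (Set.Iic x) ∧ 0 < n (Set.Ici x))
    (hcompat : (⨆ y : ℝ, Dmu μ n y) = (⨆ x : ℝ, Gmu μ n x))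
    (v₁ v₂ : ℝ) (hv₁ : 0 ≤ v₁) (hv₁₂ : v₁ ≤ v₂)
    (hv₂ : ENNReal.ofReal v₂ < ⨆ y : ℝ, Dmu μ n y) :
    (ENNReal.ofReal (mubarDinv μ n (ENNReal.ofReal v₁) - mubarDinv μ n (ENNReal.ofReal v₂))
        = ∫⁻ v in Set.Ioo v₁ v₂, nDinv μ n (ENNReal.ofReal v)) ∧
    (ENNReal.ofReal (mubarGinv μ n (ENNReal.ofReal v₂) - mubarGinv μ n (ENNReal.ofReal v₁))
        = ∫⁻ v in Set.Ioo v₁ v₂, nGinv μ n (ENNReal.ofReal v)) := by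
  open DerivProofAux in
  refine ⟨core μ n hatomless (fun s hs => (hnfin s hs).1) (fun x hx => (hnsupp x hx).2)
      v₁ v₂ hv₁ hv₁₂ hv₂, ?_⟩
  classical
  set μ' : MeasureTheory.Measure ℝ := MeasureTheory.Measure.map (fun x : ℝ => -x) μ with hμ'
  set n' : MeasureTheory.Measure ℝ := MeasureTheory.Measure.map (fun x : ℝ => -x) n with hn'
  haveI : MeasureTheory.IsProbabilityMeasure μ' :=
    MeasureTheory.Measure.isProbabilityMeasure_map measurable_neg.aemeasurable
  have hatomless' : ∀ x : ℝ, μ' {x} = 0 := by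
    intro x
    rw [hμ', MeasureTheory.Measure.map_apply measurable_neg (measurableSet_singleton x)]
    have hpre : (fun x : ℝ => -x) ⁻¹' {x} = {-x} := by
      ext z
      simp [neg_eq_iff_eq_neg]
    rw [hpre]
    exact hatomless (-x)
  have hn'Ici : ∀ t : ℝ, n' (Set.Ici t) = n (Set.Iic (-t)) := by
    intro t
    rw [hn', MeasureTheory.Measure.map_apply measurable_neg measurableSet_Ici,
      DerivProofAux.preimage_neg_Ici]
  have hfin' : ∀ s : ℝ, 0 < s → n' (Set.Ici s) < ⊤ := fun s hs => by
    rw [hn'Ici]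
    exact (hnfin s hs).2
  have hsupp' : ∀ x ∈ measSupport μ', 0 < n' (Set.Ici x) := fun x hx => by
    rw [hn'Ici]
    exact (hnsupp (-x) (DerivProofAux.measSupport_reflect μ hx)).1
  have hrefl : ∀ y : ℝ, Dmu μ' n' y = Gmu μ n (-y) := fun y => by
    rw [hμ', hn']
    exact DerivProofAux.Dmu_reflect μ n y
  have hsupD : (⨆ y : ℝ, Dmu μ' n' y) = ⨆ y : ℝ, Dmu μ n y := by
    rw [hcompat]
    refine le_antisymm (iSup_le fun y => ?_) (iSup_le fun x => ?_)
    · rw [hrefl y]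
      exact le_iSup (Gmu μ n) (-y)
    · have h : Gmu μ n x = Dmu μ' n' (-x) := by rw [hrefl, neg_neg]
      rw [h]
      exact le_iSup (Dmu μ' n') (-x)
  have hv₂' : ENNReal.ofReal v₂ < ⨆ y : ℝ, Dmu μ' n' y := by rw [hsupD]; exact hv₂
  have hw₁lt : ENNReal.ofReal v₁ < ⨆ y : ℝ, Dmu μ' n' y :=
    lt_of_le_of_lt (ENNReal.ofReal_le_ofReal hv₁₂) hv₂'
  have hcore := DerivProofAux.core μ' n' hatomless' hfin' hsupp' v₁ v₂ hv₁ hv₁₂ hv₂'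
  have hne_iff : ∀ w : ℝ≥0∞, (GinvSet μ n w).Nonempty ↔ (DinvSet μ' n' w).Nonempty := by
    intro w
    rw [hμ', hn']
    exact DerivProofAux.GinvSet_nonempty_iff μ n w
  have hsinf : ∀ w : ℝ≥0∞, sInf (DinvSet μ' n' w) = -sSup (GinvSet μ n w) := by
    intro w
    rw [hμ', hn']
    exact DerivProofAux.sInf_reflect μ n w
  have hmubar : ∀ w : ℝ≥0∞, w < (⨆ y : ℝ, Dmu μ' n' y) →
      mubarGinv μ n w = 1 - mubarDinv μ' n' w := by
    intro w hw
    have hne : (DinvSet μ' n' w).Nonempty := DerivProofAux.DinvSet_nonempty μ' n' hw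
    have hneG : (GinvSet μ n w).Nonempty := (hne_iff w).2 hne
    rw [mubarGinv, if_pos hneG, mubarDinv, if_pos hne, hsinf w]
    have hIci : μ' (Set.Ici (-sSup (GinvSet μ n w))) = μ (Set.Iic (sSup (GinvSet μ n w))) := by
      rw [hμ', MeasureTheory.Measure.map_apply measurable_neg measurableSet_Ici,
        DerivProofAux.preimage_neg_Ici, neg_neg]
    rw [hIci]
    set xs := sSup (GinvSet μ n w) with hxs
    have hsum : (μ (Set.Iic xs)).toReal + (μ (Set.Ici xs)).toReal = 1 := by
      have h := measure_union_add_inter (μ := μ) (Set.Iic xs) (measurableSet_Ici (a := xs))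
      rw [Set.Iic_union_Ici, Set.Iic_inter_Ici, Set.Icc_self, hatomless xs, add_zero,
        measure_univ] at h
      have h2 := congrArg ENNReal.toReal h
      rw [ENNReal.toReal_add (measure_ne_top μ _) (measure_ne_top μ _)] at h2
      simpa using h2.symm
    linarith
  have hnG : ∀ w : ℝ≥0∞, nGinv μ n w = nDinv μ' n' w := by
    intro w
    by_cases hne : (DinvSet μ' n' w).Nonempty
    · rw [nGinv, if_pos ((hne_iff w).2 hne), nDinv, if_pos hne, hsinf w, hn'Ici, neg_neg]
    · rw [nGinv, if_neg (fun h => hne ((hne_iff w).1 h)), nDinv, if_neg hne]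
  calc ENNReal.ofReal (mubarGinv μ n (ENNReal.ofReal v₂) - mubarGinv μ n (ENNReal.ofReal v₁))
      = ENNReal.ofReal (mubarDinv μ' n' (ENNReal.ofReal v₁)
          - mubarDinv μ' n' (ENNReal.ofReal v₂)) := by
        rw [hmubar _ hv₂', hmubar _ hw₁lt]
        congr 1
        ring
    _ = ∫⁻ v in Set.Ioo v₁ v₂, nDinv μ' n' (ENNReal.ofReal v) := hcore
    _ = ∫⁻ v in Set.Ioo v₁ v₂, nGinv μ n (ENNReal.ofReal v) :=
        MeasureTheory.lintegral_congr fun v => (hnG _).symm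
end
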